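/- Assume k ∣ q+1 and gcd(k+1, q) = 1, let δ be an integer with 1 ≤ δ ≤ q²−1, and let β = (0, γ^δ·α_1, …, γ^δ·α_k) ∈ F_{q²}^{k+1} (so n = k+1). Then the Hermitian hull of GRL_k(β, A) has F_{q²}-dimension at most ℓ. -/
import Mathlib


open Matrix BigOperators Finset

/-- Hermitian dual (with respect to `x ↦ x ^ q`) of a code `C ⊆ F^ι`. -/
def dualH {F : Type} [Field F] (q : ℕ) {ι : Type} [Fintype ι] (C : Submodule F (ι → F)) :
    Submodule F (ι → F) where
  carrier := {x | ∀ y ∈ C, ∑ i, x i * y i ^ q = 0}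
  add_mem' := by
    intro a b ha hb y hy
    have h : ∑ i, (a + b) i * y i ^ q = (∑ i, a i * y i ^ q) + ∑ i, b i * y i ^ q := by
      rw [← Finset.sum_add_distrib]
      exact Finset.sum_congr rfl fun i _ => add_mul _ _ _
    rw [h, ha y hy, hb y hy, add_zero]
  zero_mem' := by intro y hy; simp
  smul_mem' := by
    intro c a ha y hy
    have h : ∑ i, (c • a) i * y i ^ q = c * ∑ i, a i * y i ^ q := by
      rw [Finset.mul_sum]
      exact Finset.sum_congr rfl fun i _ => by
        simp [Pi.smul_apply, smul_eq_mul, mul_assoc]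
    rw [h, ha y hy, mul_zero]

/-- Generator matrix of the generalized Roth–Lempel code: evaluation columns indexed by `ι`
(entry `β j ^ r`), extra columns indexed by `Fin ℓ` (zero for rows `r < k - ℓ`, and the
corresponding row of `A` for rows `k - ℓ ≤ r ≤ k - 1`). -/
def GRLmatrix {F : Type} [Field F] (k ℓ : ℕ) (hℓk : ℓ ≤ k) {ι : Type} (β : ι → F)
    (A : Matrix (Fin ℓ) (Fin ℓ) F) : Matrix (Fin k) (ι ⊕ Fin ℓ) F :=
  fun r => Sum.elim (fun j => β j ^ (r : ℕ))
    (fun j' => if _h : (r : ℕ) < k - ℓ then 0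
      else A ⟨(r : ℕ) - (k - ℓ), by have := r.isLt; omega⟩ j')

/-- The generalized Roth–Lempel code: the row span of `GRLmatrix`. -/
def GRLcode {F : Type} [Field F] (k ℓ : ℕ) (hℓk : ℓ ≤ k) {ι : Type} (β : ι → F)
    (A : Matrix (Fin ℓ) (Fin ℓ) F) : Submodule F ((ι ⊕ Fin ℓ) → F) :=
  Submodule.span F (Set.range (GRLmatrix k ℓ hℓk β A))


section MyAux

lemma myRankAddLe {F : Type} [Field F] {n : ℕ} (M N : Matrix (Fin n) (Fin n) F) :
    (M + N).rank ≤ M.rank + N.rank := by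
  classical
  have h : LinearMap.range (M + N).mulVecLin ≤
      LinearMap.range M.mulVecLin ⊔ LinearMap.range N.mulVecLin := by
    rintro x ⟨c, rfl⟩
    rw [Matrix.mulVecLin_add]
    exact Submodule.add_mem_sup (LinearMap.mem_range_self _ c) (LinearMap.mem_range_self _ c)
  refine le_trans (Submodule.finrank_mono h) ?_
  exact Submodule.finrank_add_le_finrank_add_finrank _ _

lemma myRootSum {F : Type} [Field F] {ω : F} {k : ℕ} (h1 : ω ^ k = 1) (h2 : ω ≠ 1) :
    ∑ i ∈ Finset.range k, ω ^ i = 0 := by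
  rw [geom_sum_eq h2, h1, sub_self, zero_div]

lemma myTerm {F : Type} [Field F] (u : F) (a r s q x : ℕ) (hx : x = r + s * q) :
    (u ^ a) ^ r * ((u ^ a) ^ s) ^ q = u ^ (a * x) := by
  subst hx
  rw [← pow_mul, ← pow_mul, ← pow_mul, ← pow_add]
  congr 1; ring

lemma myHull {F : Type} [Field F] (q : ℕ) {k : ℕ} {ι : Type} [Fintype ι]
    (G : Matrix (Fin k) ι F) (M : Matrix (Fin k) (Fin k) F)
    (hM : ∀ r s, M r s = ∑ i, G r i * G s i ^ q) :
    Module.finrank F ↥(Submodule.span F (Set.range G) ⊓ dualH q (Submodule.span F (Set.range G)))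
      ≤ k - M.rank := by
  classical
  set C := Submodule.span F (Set.range G) with hC
  have hsub : C ⊓ dualH q C ≤ Submodule.map G.vecMulLinear (LinearMap.ker M.vecMulLinear) := by
    rintro x ⟨hx1, hx2⟩
    have hx1' : x ∈ LinearMap.range G.vecMulLinear := by
      rw [range_vecMulLinear]; exact hx1
    obtain ⟨c, rfl⟩ := hx1'
    refine Submodule.mem_map.2 ⟨c, LinearMap.mem_ker.2 ?_, rfl⟩
    funext s
    show (M.vecMulLinear c) s = (0 : Fin k → F) s
    have hrow : (G s) ∈ C := Submodule.subset_span ⟨s, rfl⟩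
    have h2 : ∑ i, (G.vecMulLinear c) i * (G s) i ^ q = 0 := hx2 (G s) hrow
    have hx : ∀ i, (G.vecMulLinear c) i = ∑ r, c r * G r i := by
      intro i; simp [Matrix.vecMulLinear_apply, Matrix.vecMul, dotProduct]
    calc (M.vecMulLinear c) s = ∑ r, c r * M r s := by
          simp [Matrix.vecMulLinear_apply, Matrix.vecMul, dotProduct]
      _ = ∑ r, ∑ i, c r * (G r i * G s i ^ q) := by
          refine Finset.sum_congr rfl fun r _ => ?_; rw [hM, Finset.mul_sum]
      _ = ∑ i, (∑ r, c r * G r i) * G s i ^ q := by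
          rw [Finset.sum_comm]
          refine Finset.sum_congr rfl fun i _ => ?_
          rw [Finset.sum_mul]
          exact Finset.sum_congr rfl fun r _ => (mul_assoc _ _ _).symm
      _ = 0 := by rw [← h2]; exact Finset.sum_congr rfl fun i _ => by rw [hx]
  refine le_trans (Submodule.finrank_mono hsub) ?_
  refine le_trans (Submodule.finrank_map_le _ _) ?_
  have hvm : M.vecMulLinear = Mᵀ.mulVecLin := by
    rw [← Matrix.vecMulLinear_transpose, Matrix.transpose_transpose]
  rw [hvm]
  have h3 := LinearMap.finrank_range_add_finrank_ker (Mᵀ.mulVecLin)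
  rw [Module.finrank_fin_fun] at h3
  have h4 : Mᵀ.rank = M.rank := Matrix.rank_transpose M
  have h5 : Mᵀ.rank = Module.finrank F ↥(LinearMap.range Mᵀ.mulVecLin) := rfl
  omega

end MyAux

/-- with `k ∣ q + 1`, `gcd(k+1, q) = 1` and `β = (0, γ^δ·α_1, …, γ^δ·α_k)`,
the Hermitian hull of the GRL code has dimension at most `ℓ`. -/
theorem stmt15 {F : Type} [Field F] [Fintype F]
    (q p m : ℕ) (hp : p.Prime) (hodd : Odd p) (hm : 0 < m) (hq : q = p ^ m)
    (hcard : Fintype.card F = q ^ 2)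
    (γ : Fˣ) (hγ : ∀ x : Fˣ, x ∈ Subgroup.zpowers γ)
    (k ℓ : ℕ) (hℓ2 : 2 ≤ ℓ) (hℓk : ℓ ≤ k) (hkdvd : k ∣ q ^ 2 - 1)
    (A : Matrix (Fin ℓ) (Fin ℓ) F) (hA : IsUnit A.det)
    (α : Fin k → F)
    (hα : ∀ i : Fin k, α i = (γ : F) ^ ((q ^ 2 - 1) / k * ((i : ℕ) + 1)))
    (hkq : k ∣ q + 1) (hgcd : Nat.gcd (k + 1) q = 1)
    (δ : ℕ) (hδ1 : 1 ≤ δ) (hδq : δ ≤ q ^ 2 - 1)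
    (β : Fin (k + 1) → F) (hβ : β = Fin.cons 0 (fun i => (γ : F) ^ δ * α i)) :
    Module.finrank F ↥(GRLcode k ℓ hℓk β A ⊓ dualH q (GRLcode k ℓ hℓk β A)) ≤ ℓ := by
  classical
  -- basic numerics
  have hk0 : 0 < k := lt_of_lt_of_le (by omega) hℓk
  have hq2 : 2 ≤ q := by
    rw [hq]
    calc 2 ≤ p := hp.two_le
      _ = p ^ 1 := (pow_one p).symm
      _ ≤ p ^ m := Nat.pow_le_pow_right hp.pos hm
  have hq2pos : 1 ≤ q ^ 2 - 1 := by
    have : 4 ≤ q ^ 2 := by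
      calc 4 = 2 * 2 := rfl
        _ ≤ q * q := Nat.mul_le_mul hq2 hq2
        _ = q ^ 2 := (sq q).symm
    omega
  set e := (q ^ 2 - 1) / k with he_def
  have hek : e * k = q ^ 2 - 1 := Nat.div_mul_cancel hkdvd
  have he : 0 < e := by
    rcases Nat.eq_zero_or_pos e with h | h
    · rw [h, zero_mul] at hek; omega
    · exact h
  -- the generator of the unit group
  set u : F := (γ : F) with hu_def
  have hu0 : u ≠ 0 := Units.ne_zero γ
  have ho : orderOf γ = q ^ 2 - 1 := by
    rw [orderOf_eq_card_of_forall_mem_zpowers hγ, Nat.card_eq_fintype_card,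
      Fintype.card_units, hcard]
  have hu1 : u ^ (q ^ 2 - 1) = 1 := by
    have h : γ ^ (q ^ 2 - 1) = 1 := by rw [← ho]; exact pow_orderOf_eq_one γ
    calc u ^ (q ^ 2 - 1) = ((γ ^ (q ^ 2 - 1) : Fˣ) : F) := by rw [Units.val_pow_eq_pow_val]
      _ = ((1 : Fˣ) : F) := by rw [h]
      _ = 1 := Units.val_one
  have horder : ∀ x : ℕ, u ^ (e * x) = 1 → k ∣ x := by
    intro x hx
    have h1 : γ ^ (e * x) = 1 := by
      apply Units.ext
      rw [Units.val_pow_eq_pow_val, Units.val_one]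
      exact hx
    have h2 : q ^ 2 - 1 ∣ e * x := by rw [← ho]; exact orderOf_dvd_of_pow_eq_one h1
    rw [← hek] at h2
    exact (Nat.mul_dvd_mul_iff_left he).mp h2
  -- characteristic
  have hcharP : CharP F p := by
    obtain ⟨n, hc⟩ := FiniteField.card F (ringChar F)
    have hrp : (ringChar F).Prime := hc.1
    have hcast : ringChar F ∣ q ^ 2 := by
      rcases hc with ⟨hpr, hcc⟩
      rw [← hcard, hcc]
      exact dvd_pow_self _ (by exact_mod_cast n.pos.ne')
    have : ringChar F = p := by
      have h1 : ringChar F ∣ p := by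
        have : ringChar F ∣ p ^ (m * 2) := by
          rw [hq] at hcast
          rwa [← pow_mul] at hcast
        exact hrp.dvd_of_dvd_pow this
      exact (Nat.prime_dvd_prime_iff_eq hrp hp).mp h1
    rw [← this]
    exact ringChar.charP F
  have hpq : p ∣ q := by rw [hq]; exact dvd_pow_self p hm.ne'
  have hpk1 : ¬ p ∣ (k + 1) := by
    intro h
    have : p ∣ Nat.gcd (k + 1) q := Nat.dvd_gcd h hpq
    rw [hgcd] at this
    have := Nat.le_of_dvd one_pos this
    have := hp.two_le
    omega
  have hpk : ¬ p ∣ k := by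
    intro h
    have h1 : p ∣ q + 1 := dvd_trans h hkq
    have h2 : p ∣ 1 := by
      have := Nat.dvd_sub h1 hpq
      simpa using this
    have := Nat.le_of_dvd one_pos h2
    have := hp.two_le
    omega
  have hck1 : ((k : F) + 1) ≠ 0 := by
    have : (((k + 1 : ℕ)) : F) ≠ 0 := by
      rw [Ne, CharP.cast_eq_zero_iff F p]
      exact hpk1
    push_cast at this
    exact this
  have hck : (k : F) ≠ 0 := by
    rw [Ne, CharP.cast_eq_zero_iff F p]
    exact hpk
  -- matrices
  set G := GRLmatrix k ℓ hℓk β A with hG_def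
  set M : Matrix (Fin k) (Fin k) F := fun r s => ∑ i, G r i * G s i ^ q with hM_def
  set d : Fin k → F :=
    fun r => if (r : ℕ) = 0 then (k : F) + 1
      else (k : F) * u ^ (δ * ((r : ℕ) + (r : ℕ) * q)) with hd_def
  set D := Matrix.diagonal d with hD_def
  set P : Matrix (Fin k) (Fin ℓ) F :=
    fun r j => if (r : ℕ) = k - ℓ + (j : ℕ) then 1 else 0 with hP_def
  set R : Matrix (Fin ℓ) (Fin k) F :=
    fun j s => ∑ j', A j j' * (G s (Sum.inr j')) ^ q with hR_def
  -- extra-column part of the Gram matrix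
  have part2 : ∀ r s : Fin k,
      ∑ j' : Fin ℓ, G r (Sum.inr j') * G s (Sum.inr j') ^ q = (P * R) r s := by
    intro r s
    by_cases hr : (r : ℕ) < k - ℓ
    · have hGz : ∀ j' : Fin ℓ, G r (Sum.inr j') = 0 := by
        intro j'
        show (if _h : (r : ℕ) < k - ℓ then (0 : F)
          else A ⟨(r : ℕ) - (k - ℓ), by have := r.isLt; omega⟩ j') = 0
        rw [dif_pos hr]
      rw [Finset.sum_congr rfl (fun j' _ => by rw [hGz j', zero_mul]), Finset.sum_const_zero,
        Matrix.mul_apply]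
      symm
      apply Finset.sum_eq_zero
      intro j _
      have hne : ¬ ((r : ℕ) = k - ℓ + (j : ℕ)) := by omega
      show (if (r : ℕ) = k - ℓ + (j : ℕ) then (1 : F) else 0) * R j s = 0
      rw [if_neg hne, zero_mul]
    · push_neg at hr
      have hrlt : (r : ℕ) - (k - ℓ) < ℓ := by have := r.isLt; omega
      have hGA : ∀ j' : Fin ℓ, G r (Sum.inr j') = A ⟨(r : ℕ) - (k - ℓ), hrlt⟩ j' := by
        intro j'
        show (if _h : (r : ℕ) < k - ℓ then (0 : F)
          else A ⟨(r : ℕ) - (k - ℓ), by have := r.isLt; omega⟩ j') = _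
        rw [dif_neg (not_lt.mpr hr)]
      rw [Finset.sum_congr rfl (fun j' _ => by rw [hGA j']), Matrix.mul_apply]
      symm
      rw [Finset.sum_eq_single (⟨(r : ℕ) - (k - ℓ), hrlt⟩ : Fin ℓ)]
      · show (if (r : ℕ) = k - ℓ + ((r : ℕ) - (k - ℓ)) then (1 : F) else 0) * R _ s = _
        rw [if_pos (by omega), one_mul]
      · intro j _ hj
        have hne : ¬ ((r : ℕ) = k - ℓ + (j : ℕ)) := by
          intro h
          exact hj (Fin.ext (by show (j : ℕ) = (r : ℕ) - (k - ℓ); omega))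
        show (if (r : ℕ) = k - ℓ + (j : ℕ) then (1 : F) else 0) * R j s = 0
        rw [if_neg hne, zero_mul]
      · intro h; exact absurd (Finset.mem_univ _) h
  -- evaluation part of the Gram matrix
  have hβ0 : β 0 = 0 := by rw [hβ]; exact Fin.cons_zero _ _
  have hβs : ∀ i : Fin k, β i.succ = u ^ (δ + e * ((i : ℕ) + 1)) := by
    intro i
    rw [hβ, Fin.cons_succ, hα i, ← pow_add]
  have part1 : ∀ r s : Fin k,
      ∑ j : Fin (k + 1), G r (Sum.inl j) * G s (Sum.inl j) ^ q = D r s := by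
    intro r s
    have hGl : ∀ (t : Fin k) (j : Fin (k + 1)), G t (Sum.inl j) = β j ^ (t : ℕ) :=
      fun _ _ => rfl
    simp only [hGl]
    rw [Fin.sum_univ_succ, hβ0]
    set x := (r : ℕ) + (s : ℕ) * q with hx_def
    have hterm : ∀ i : Fin k,
        β i.succ ^ (r : ℕ) * (β i.succ ^ (s : ℕ)) ^ q
          = u ^ (δ * x) * (u ^ (e * x)) ^ ((i : ℕ) + 1) := by
      intro i
      rw [hβs i, myTerm u (δ + e * ((i : ℕ) + 1)) (r : ℕ) (s : ℕ) q x hx_def]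
      rw [← pow_mul, ← pow_add]
      congr 1
      ring
    rw [Finset.sum_congr rfl (fun i _ => hterm i)]
    by_cases hrs : (r : ℕ) = (s : ℕ)
    · have hfr : r = s := Fin.ext hrs
      subst hfr
      have hkx : k ∣ x := by
        have hxe : x = (q + 1) * (r : ℕ) := by rw [hx_def]; ring
        rw [hxe]
        exact Dvd.dvd.mul_right hkq _
      obtain ⟨t, ht⟩ := hkx
      have hω : u ^ (e * x) = 1 := by
        rw [ht, show e * (k * t) = (q ^ 2 - 1) * t by rw [← hek]; ring, pow_mul, hu1, one_pow]
      rw [Finset.sum_congr rfl (fun i _ => by rw [hω, one_pow, mul_one])]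
      rw [Finset.sum_const, Finset.card_univ, Fintype.card_fin, nsmul_eq_mul]
      rw [hD_def, Matrix.diagonal_apply_eq]
      simp only [hd_def]
      by_cases hr0 : (r : ℕ) = 0
      · rw [if_pos hr0]
        have hx0 : x = 0 := by rw [hx_def, hr0]; simp
        rw [hx0, hr0]
        simp only [pow_zero, one_pow, one_mul, Nat.mul_zero, mul_one]
        ring
      · rw [if_neg hr0, zero_pow hr0, zero_mul, zero_add, hx_def]
    · have hfr : r ≠ s := fun h => hrs (congrArg _ h)
      rw [hD_def, Matrix.diagonal_apply_ne d hfr]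
      have hkx : ¬ k ∣ x := by
        intro hdvd
        rw [hx_def] at hdvd
        have h1 : (k : ℤ) ∣ (r : ℤ) + (s : ℤ) * q := by exact_mod_cast hdvd
        have h2 : (k : ℤ) ∣ (s : ℤ) * ((q : ℤ) + 1) := by
          have h2' : k ∣ (s : ℕ) * (q + 1) := Dvd.dvd.mul_left hkq _
          exact_mod_cast h2'
        have h3 : (k : ℤ) ∣ (r : ℤ) - (s : ℤ) := by
          have h3' := dvd_sub h1 h2
          have heq : (r : ℤ) + (s : ℤ) * q - (s : ℤ) * ((q : ℤ) + 1) = (r : ℤ) - s := by ring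
          rwa [heq] at h3'
        have h4 : (r : ℤ) - (s : ℤ) = 0 := by
          apply Int.eq_zero_of_abs_lt_dvd h3
          rw [abs_lt]
          have hrl := r.isLt
          have hsl := s.isLt
          omega
        apply hrs
        omega
      have hωk : (u ^ (e * x)) ^ k = 1 := by
        rw [← pow_mul, show e * x * k = (q ^ 2 - 1) * x by rw [← hek]; ring, pow_mul, hu1,
          one_pow]
      have hω1 : u ^ (e * x) ≠ 1 := fun h => hkx (horder x h)
      have hsum : ∑ i : Fin k, (u ^ (e * x)) ^ ((i : ℕ) + 1) = 0 := by
        rw [Fin.sum_univ_eq_sum_range (fun j => (u ^ (e * x)) ^ (j + 1)) k]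
        rw [Finset.sum_congr rfl (fun j _ => pow_succ (u ^ (e * x)) j), ← Finset.sum_mul,
          myRootSum hωk hω1, zero_mul]
      rw [← Finset.mul_sum, hsum, mul_zero, add_zero]
      rcases Nat.eq_zero_or_pos (r : ℕ) with h | h
      · have hs0 : (s : ℕ) ≠ 0 := by omega
        rw [zero_pow hs0, zero_pow (by omega : q ≠ 0), mul_zero]
      · rw [zero_pow (by omega : (r : ℕ) ≠ 0), zero_mul]
  -- the Gram matrix decomposes
  have hMeq : M = D + P * R := by
    ext r s
    show (∑ i, G r i * G s i ^ q) = _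
    rw [Fintype.sum_sum_type (fun i => G r i * G s i ^ q), part1 r s, part2 r s,
      Matrix.add_apply]
  have hdne : ∀ r : Fin k, d r ≠ 0 := by
    intro r
    simp only [hd_def]
    split_ifs with h
    · exact hck1
    · exact mul_ne_zero hck (pow_ne_zero _ hu0)
  have hDu : IsUnit D := by
    rw [Matrix.isUnit_iff_isUnit_det, hD_def, Matrix.det_diagonal, isUnit_iff_ne_zero]
    exact Finset.prod_ne_zero_iff.mpr (fun r _ => hdne r)
  have hDrank : D.rank = k := by rw [Matrix.rank_of_isUnit D hDu, Fintype.card_fin]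
  have hDeq : D = M + (-P) * R := by
    rw [Matrix.neg_mul, hMeq]
    ext r s
    simp only [Matrix.add_apply, Matrix.neg_apply]
    ring
  have hrank1 : D.rank ≤ M.rank + ((-P) * R).rank := by
    rw [hDeq]; exact myRankAddLe _ _
  have hrank2 : ((-P) * R).rank ≤ ℓ :=
    le_trans (Matrix.rank_mul_le_left _ _) (Matrix.rank_le_width _)
  have hfin := myHull q G M (fun r s => rfl)
  have hcode : GRLcode k ℓ hℓk β A = Submodule.span F (Set.range G) := rfl
  rw [hcode]
  exact le_trans hfin (by omega)
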